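/- Let p be a prime and m, r ≥ 1 integers. Then the six sums Σ_{(a,b,c,d) ∈ U_{ab}(m·p^r)} B(a,b,c,d), Σ_{(a,b,c,d) ∈ U_{ac}(m·p^r)} B(a,b,c,d), Σ_{(a,b,c,d) ∈ U_{ad}(m·p^r)} B(a,b,c,d), Σ_{(a,b,c,d) ∈ U_{bc}(m·p^r)} B(a,b,c,d), Σ_{(a,b,c,d) ∈ U_{bd}(m·p^r)} B(a,b,c,d), and Σ_{(a,b,c,d) ∈ U_{cd}(m·p^r)} B(a,b,c,d) are all equal. -/

import Mathlib

/-- Multinomial coefficient `n!/(x!·y!·z!)`. -/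
def multi3 (n x y z : ℕ) : ℕ := n.factorial / (x.factorial * y.factorial * z.factorial)

/-- The set `U(n)` of 12-tuples `(a₁,a₂,a₃,b₁,b₂,b₃,c₁,c₂,c₃,d₁,d₂,d₃)` of nonnegative
integers, encoded as functions `Fin 12 → ℕ`, satisfying the eight linear equations. -/
def Uset (n : ℕ) : Finset (Fin 12 → ℕ) :=
  (Fintype.piFinset fun _ : Fin 12 => Finset.range (n + 1)).filter fun v =>
    v 0 + v 1 + v 2 = n ∧ v 3 + v 4 + v 5 = n ∧ v 6 + v 7 + v 8 = n ∧
    v 9 + v 10 + v 11 = n ∧ v 3 + v 6 + v 9 = n ∧ v 0 + v 4 + v 10 = n ∧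
    v 1 + v 5 + v 7 = n ∧ v 2 + v 8 + v 11 = n

/-- The summand `B(a,b,c,d) = (-1)^(a₂+b₁+d₃) · binom(n;a)·binom(n;b)·binom(n;c)·binom(n;d)`. -/
def B (n : ℕ) (v : Fin 12 → ℕ) : ℤ :=
  (-1) ^ (v 1 + v 3 + v 11) * multi3 n (v 0) (v 1) (v 2) * multi3 n (v 3) (v 4) (v 5) *
    multi3 n (v 6) (v 7) (v 8) * multi3 n (v 9) (v 10) (v 11)

lemma mem_Uset {n : ℕ} {v : Fin 12 → ℕ} : v ∈ Uset n ↔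
    (∀ i, v i ≤ n) ∧ (v 0 + v 1 + v 2 = n ∧ v 3 + v 4 + v 5 = n ∧ v 6 + v 7 + v 8 = n ∧
    v 9 + v 10 + v 11 = n ∧ v 3 + v 6 + v 9 = n ∧ v 0 + v 4 + v 10 = n ∧
    v 1 + v 5 + v 7 = n ∧ v 2 + v 8 + v 11 = n) := by
  simp [Uset, Fintype.mem_piFinset, Nat.lt_succ_iff, Finset.mem_filter]

lemma neg_one_pow_congr_mod2 {a b : ℕ} (h : a % 2 = b % 2) : ((-1 : ℤ)) ^ a = (-1) ^ b := by
  rw [← Nat.div_add_mod a 2, ← Nat.div_add_mod b 2, h]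
  simp [pow_add, pow_mul]

lemma multi3_132 (n x y z : ℕ) : multi3 n x z y = multi3 n x y z := by
  unfold multi3; congr 1; ring
lemma multi3_213 (n x y z : ℕ) : multi3 n y x z = multi3 n x y z := by
  unfold multi3; congr 1; ring
lemma multi3_321 (n x y z : ℕ) : multi3 n z y x = multi3 n x y z := by
  unfold multi3; congr 1; ring

lemma sum_perm {n : ℕ} (f : (Fin 12 → ℕ) → (Fin 12 → ℕ)) (s t : Finset (Fin 12 → ℕ))
    (hff : ∀ v, f (f v) = v)
    (hst : ∀ v ∈ s, f v ∈ t) (hts : ∀ v ∈ t, f v ∈ s)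
    (hB : ∀ v ∈ t, B n (f v) = B n v) :
    ∑ v ∈ s, B n v = ∑ v ∈ t, B n v := by
  refine Finset.sum_bij' (fun v _ => f v) (fun v _ => f v) hst hts
    (fun a _ => hff a) (fun a _ => hff a) ?_
  intro a ha
  have := hB (f a) (hst a ha)
  rwa [hff a] at this

def fbc (v : Fin 12 → ℕ) : Fin 12 → ℕ := ![v 2, v 1, v 0, v 6, v 8, v 7, v 3, v 5, v 4, v 9, v 11, v 10]

lemma fbc_0 (v : Fin 12 → ℕ) : fbc v 0 = v 2 := rfl
lemma fbc_1 (v : Fin 12 → ℕ) : fbc v 1 = v 1 := rfl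
lemma fbc_2 (v : Fin 12 → ℕ) : fbc v 2 = v 0 := rfl
lemma fbc_3 (v : Fin 12 → ℕ) : fbc v 3 = v 6 := rfl
lemma fbc_4 (v : Fin 12 → ℕ) : fbc v 4 = v 8 := rfl
lemma fbc_5 (v : Fin 12 → ℕ) : fbc v 5 = v 7 := rfl
lemma fbc_6 (v : Fin 12 → ℕ) : fbc v 6 = v 3 := rfl
lemma fbc_7 (v : Fin 12 → ℕ) : fbc v 7 = v 5 := rfl
lemma fbc_8 (v : Fin 12 → ℕ) : fbc v 8 = v 4 := rfl
lemma fbc_9 (v : Fin 12 → ℕ) : fbc v 9 = v 9 := rfl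
lemma fbc_10 (v : Fin 12 → ℕ) : fbc v 10 = v 11 := rfl
lemma fbc_11 (v : Fin 12 → ℕ) : fbc v 11 = v 10 := rfl

lemma fbc_inv (v : Fin 12 → ℕ) : fbc (fbc v) = v := by
  funext i; fin_cases i <;> rfl

lemma fbc_memU {n : ℕ} {v : Fin 12 → ℕ} (h : v ∈ Uset n) : fbc v ∈ Uset n := by
  rw [mem_Uset] at h ⊢
  obtain ⟨hb, he⟩ := h
  refine ⟨fun i => ?_, ?_⟩
  · fin_cases i <;> exact hb _
  · simp only [fbc_0, fbc_1, fbc_2, fbc_3, fbc_4, fbc_5, fbc_6, fbc_7, fbc_8, fbc_9, fbc_10, fbc_11]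
    omega

lemma fbc_B {n : ℕ} {v : Fin 12 → ℕ} (h : v ∈ Uset n) : B n (fbc v) = B n v := by
  obtain ⟨-, e1, e2, e3, e4, e5, e6, e7, e8⟩ := mem_Uset.mp h
  simp only [B, fbc_0, fbc_1, fbc_2, fbc_3, fbc_4, fbc_5, fbc_6, fbc_7, fbc_8, fbc_9, fbc_10, fbc_11]
  rw [neg_one_pow_congr_mod2 (a := v 1 + v 6 + v 10) (b := v 1 + v 3 + v 11) (by omega),
    multi3_321 n (v 0) (v 1) (v 2), multi3_132 n (v 6) (v 7) (v 8), multi3_132 n (v 3) (v 4) (v 5), multi3_132 n (v 9) (v 10) (v 11)]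
  ring

def fbd (v : Fin 12 → ℕ) : Fin 12 → ℕ := ![v 0, v 2, v 1, v 9, v 10, v 11, v 6, v 8, v 7, v 3, v 4, v 5]

lemma fbd_0 (v : Fin 12 → ℕ) : fbd v 0 = v 0 := rfl
lemma fbd_1 (v : Fin 12 → ℕ) : fbd v 1 = v 2 := rfl
lemma fbd_2 (v : Fin 12 → ℕ) : fbd v 2 = v 1 := rfl
lemma fbd_3 (v : Fin 12 → ℕ) : fbd v 3 = v 9 := rfl
lemma fbd_4 (v : Fin 12 → ℕ) : fbd v 4 = v 10 := rfl
lemma fbd_5 (v : Fin 12 → ℕ) : fbd v 5 = v 11 := rfl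
lemma fbd_6 (v : Fin 12 → ℕ) : fbd v 6 = v 6 := rfl
lemma fbd_7 (v : Fin 12 → ℕ) : fbd v 7 = v 8 := rfl
lemma fbd_8 (v : Fin 12 → ℕ) : fbd v 8 = v 7 := rfl
lemma fbd_9 (v : Fin 12 → ℕ) : fbd v 9 = v 3 := rfl
lemma fbd_10 (v : Fin 12 → ℕ) : fbd v 10 = v 4 := rfl
lemma fbd_11 (v : Fin 12 → ℕ) : fbd v 11 = v 5 := rfl

lemma fbd_inv (v : Fin 12 → ℕ) : fbd (fbd v) = v := by
  funext i; fin_cases i <;> rfl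

lemma fbd_memU {n : ℕ} {v : Fin 12 → ℕ} (h : v ∈ Uset n) : fbd v ∈ Uset n := by
  rw [mem_Uset] at h ⊢
  obtain ⟨hb, he⟩ := h
  refine ⟨fun i => ?_, ?_⟩
  · fin_cases i <;> exact hb _
  · simp only [fbd_0, fbd_1, fbd_2, fbd_3, fbd_4, fbd_5, fbd_6, fbd_7, fbd_8, fbd_9, fbd_10, fbd_11]
    omega

lemma fbd_B {n : ℕ} {v : Fin 12 → ℕ} (h : v ∈ Uset n) : B n (fbd v) = B n v := by
  obtain ⟨-, e1, e2, e3, e4, e5, e6, e7, e8⟩ := mem_Uset.mp h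
  simp only [B, fbd_0, fbd_1, fbd_2, fbd_3, fbd_4, fbd_5, fbd_6, fbd_7, fbd_8, fbd_9, fbd_10, fbd_11]
  rw [neg_one_pow_congr_mod2 (a := v 2 + v 9 + v 5) (b := v 1 + v 3 + v 11) (by omega),
    multi3_132 n (v 0) (v 1) (v 2), multi3_132 n (v 6) (v 7) (v 8)]
  ring

def fac (v : Fin 12 → ℕ) : Fin 12 → ℕ := ![v 6, v 7, v 8, v 4, v 3, v 5, v 0, v 1, v 2, v 10, v 9, v 11]

lemma fac_0 (v : Fin 12 → ℕ) : fac v 0 = v 6 := rfl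
lemma fac_1 (v : Fin 12 → ℕ) : fac v 1 = v 7 := rfl
lemma fac_2 (v : Fin 12 → ℕ) : fac v 2 = v 8 := rfl
lemma fac_3 (v : Fin 12 → ℕ) : fac v 3 = v 4 := rfl
lemma fac_4 (v : Fin 12 → ℕ) : fac v 4 = v 3 := rfl
lemma fac_5 (v : Fin 12 → ℕ) : fac v 5 = v 5 := rfl
lemma fac_6 (v : Fin 12 → ℕ) : fac v 6 = v 0 := rfl
lemma fac_7 (v : Fin 12 → ℕ) : fac v 7 = v 1 := rfl
lemma fac_8 (v : Fin 12 → ℕ) : fac v 8 = v 2 := rfl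
lemma fac_9 (v : Fin 12 → ℕ) : fac v 9 = v 10 := rfl
lemma fac_10 (v : Fin 12 → ℕ) : fac v 10 = v 9 := rfl
lemma fac_11 (v : Fin 12 → ℕ) : fac v 11 = v 11 := rfl

lemma fac_inv (v : Fin 12 → ℕ) : fac (fac v) = v := by
  funext i; fin_cases i <;> rfl

lemma fac_memU {n : ℕ} {v : Fin 12 → ℕ} (h : v ∈ Uset n) : fac v ∈ Uset n := by
  rw [mem_Uset] at h ⊢
  obtain ⟨hb, he⟩ := h
  refine ⟨fun i => ?_, ?_⟩
  · fin_cases i <;> exact hb _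
  · simp only [fac_0, fac_1, fac_2, fac_3, fac_4, fac_5, fac_6, fac_7, fac_8, fac_9, fac_10, fac_11]
    omega

lemma fac_B {n : ℕ} {v : Fin 12 → ℕ} (h : v ∈ Uset n) : B n (fac v) = B n v := by
  obtain ⟨-, e1, e2, e3, e4, e5, e6, e7, e8⟩ := mem_Uset.mp h
  simp only [B, fac_0, fac_1, fac_2, fac_3, fac_4, fac_5, fac_6, fac_7, fac_8, fac_9, fac_10, fac_11]
  rw [neg_one_pow_congr_mod2 (a := v 7 + v 4 + v 11) (b := v 1 + v 3 + v 11) (by omega),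
    multi3_213 n (v 3) (v 4) (v 5), multi3_213 n (v 9) (v 10) (v 11)]
  ring

def fad (v : Fin 12 → ℕ) : Fin 12 → ℕ := ![v 10, v 9, v 11, v 5, v 4, v 3, v 7, v 6, v 8, v 1, v 0, v 2]

lemma fad_0 (v : Fin 12 → ℕ) : fad v 0 = v 10 := rfl
lemma fad_1 (v : Fin 12 → ℕ) : fad v 1 = v 9 := rfl
lemma fad_2 (v : Fin 12 → ℕ) : fad v 2 = v 11 := rfl
lemma fad_3 (v : Fin 12 → ℕ) : fad v 3 = v 5 := rfl
lemma fad_4 (v : Fin 12 → ℕ) : fad v 4 = v 4 := rfl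
lemma fad_5 (v : Fin 12 → ℕ) : fad v 5 = v 3 := rfl
lemma fad_6 (v : Fin 12 → ℕ) : fad v 6 = v 7 := rfl
lemma fad_7 (v : Fin 12 → ℕ) : fad v 7 = v 6 := rfl
lemma fad_8 (v : Fin 12 → ℕ) : fad v 8 = v 8 := rfl
lemma fad_9 (v : Fin 12 → ℕ) : fad v 9 = v 1 := rfl
lemma fad_10 (v : Fin 12 → ℕ) : fad v 10 = v 0 := rfl
lemma fad_11 (v : Fin 12 → ℕ) : fad v 11 = v 2 := rfl

lemma fad_inv (v : Fin 12 → ℕ) : fad (fad v) = v := by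
  funext i; fin_cases i <;> rfl

lemma fad_memU {n : ℕ} {v : Fin 12 → ℕ} (h : v ∈ Uset n) : fad v ∈ Uset n := by
  rw [mem_Uset] at h ⊢
  obtain ⟨hb, he⟩ := h
  refine ⟨fun i => ?_, ?_⟩
  · fin_cases i <;> exact hb _
  · simp only [fad_0, fad_1, fad_2, fad_3, fad_4, fad_5, fad_6, fad_7, fad_8, fad_9, fad_10, fad_11]
    omega

lemma fad_B {n : ℕ} {v : Fin 12 → ℕ} (h : v ∈ Uset n) : B n (fad v) = B n v := by
  obtain ⟨-, e1, e2, e3, e4, e5, e6, e7, e8⟩ := mem_Uset.mp h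
  simp only [B, fad_0, fad_1, fad_2, fad_3, fad_4, fad_5, fad_6, fad_7, fad_8, fad_9, fad_10, fad_11]
  rw [neg_one_pow_congr_mod2 (a := v 9 + v 5 + v 2) (b := v 1 + v 3 + v 11) (by omega),
    multi3_213 n (v 9) (v 10) (v 11), multi3_321 n (v 3) (v 4) (v 5), multi3_213 n (v 6) (v 7) (v 8), multi3_213 n (v 0) (v 1) (v 2)]
  ring

def fcd (v : Fin 12 → ℕ) : Fin 12 → ℕ := ![v 6, v 8, v 7, v 10, v 9, v 11, v 0, v 2, v 1, v 4, v 3, v 5]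

lemma fcd_0 (v : Fin 12 → ℕ) : fcd v 0 = v 6 := rfl
lemma fcd_1 (v : Fin 12 → ℕ) : fcd v 1 = v 8 := rfl
lemma fcd_2 (v : Fin 12 → ℕ) : fcd v 2 = v 7 := rfl
lemma fcd_3 (v : Fin 12 → ℕ) : fcd v 3 = v 10 := rfl
lemma fcd_4 (v : Fin 12 → ℕ) : fcd v 4 = v 9 := rfl
lemma fcd_5 (v : Fin 12 → ℕ) : fcd v 5 = v 11 := rfl
lemma fcd_6 (v : Fin 12 → ℕ) : fcd v 6 = v 0 := rfl
lemma fcd_7 (v : Fin 12 → ℕ) : fcd v 7 = v 2 := rfl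
lemma fcd_8 (v : Fin 12 → ℕ) : fcd v 8 = v 1 := rfl
lemma fcd_9 (v : Fin 12 → ℕ) : fcd v 9 = v 4 := rfl
lemma fcd_10 (v : Fin 12 → ℕ) : fcd v 10 = v 3 := rfl
lemma fcd_11 (v : Fin 12 → ℕ) : fcd v 11 = v 5 := rfl

lemma fcd_inv (v : Fin 12 → ℕ) : fcd (fcd v) = v := by
  funext i; fin_cases i <;> rfl

lemma fcd_memU {n : ℕ} {v : Fin 12 → ℕ} (h : v ∈ Uset n) : fcd v ∈ Uset n := by
  rw [mem_Uset] at h ⊢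
  obtain ⟨hb, he⟩ := h
  refine ⟨fun i => ?_, ?_⟩
  · fin_cases i <;> exact hb _
  · simp only [fcd_0, fcd_1, fcd_2, fcd_3, fcd_4, fcd_5, fcd_6, fcd_7, fcd_8, fcd_9, fcd_10, fcd_11]
    omega

lemma fcd_B {n : ℕ} {v : Fin 12 → ℕ} (h : v ∈ Uset n) : B n (fcd v) = B n v := by
  obtain ⟨-, e1, e2, e3, e4, e5, e6, e7, e8⟩ := mem_Uset.mp h
  simp only [B, fcd_0, fcd_1, fcd_2, fcd_3, fcd_4, fcd_5, fcd_6, fcd_7, fcd_8, fcd_9, fcd_10, fcd_11]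
  rw [neg_one_pow_congr_mod2 (a := v 8 + v 10 + v 5) (b := v 1 + v 3 + v 11) (by omega),
    multi3_132 n (v 6) (v 7) (v 8), multi3_213 n (v 9) (v 10) (v 11), multi3_132 n (v 0) (v 1) (v 2), multi3_213 n (v 3) (v 4) (v 5)]
  ring

lemma six (p n : ℕ) :
    (∑ v ∈ (Uset n).filter (fun v => (¬ (p ∣ v 0 ∧ p ∣ v 1 ∧ p ∣ v 2)) ∧ (¬ (p ∣ v 3 ∧ p ∣ v 4 ∧ p ∣ v 5))), B n v) = (∑ v ∈ (Uset n).filter (fun v => (¬ (p ∣ v 0 ∧ p ∣ v 1 ∧ p ∣ v 2)) ∧ (¬ (p ∣ v 6 ∧ p ∣ v 7 ∧ p ∣ v 8))), B n v) ∧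
    (∑ v ∈ (Uset n).filter (fun v => (¬ (p ∣ v 0 ∧ p ∣ v 1 ∧ p ∣ v 2)) ∧ (¬ (p ∣ v 3 ∧ p ∣ v 4 ∧ p ∣ v 5))), B n v) = (∑ v ∈ (Uset n).filter (fun v => (¬ (p ∣ v 0 ∧ p ∣ v 1 ∧ p ∣ v 2)) ∧ (¬ (p ∣ v 9 ∧ p ∣ v 10 ∧ p ∣ v 11))), B n v) ∧
    (∑ v ∈ (Uset n).filter (fun v => (¬ (p ∣ v 0 ∧ p ∣ v 1 ∧ p ∣ v 2)) ∧ (¬ (p ∣ v 3 ∧ p ∣ v 4 ∧ p ∣ v 5))), B n v) = (∑ v ∈ (Uset n).filter (fun v => (¬ (p ∣ v 3 ∧ p ∣ v 4 ∧ p ∣ v 5)) ∧ (¬ (p ∣ v 6 ∧ p ∣ v 7 ∧ p ∣ v 8))), B n v) ∧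
    (∑ v ∈ (Uset n).filter (fun v => (¬ (p ∣ v 0 ∧ p ∣ v 1 ∧ p ∣ v 2)) ∧ (¬ (p ∣ v 3 ∧ p ∣ v 4 ∧ p ∣ v 5))), B n v) = (∑ v ∈ (Uset n).filter (fun v => (¬ (p ∣ v 3 ∧ p ∣ v 4 ∧ p ∣ v 5)) ∧ (¬ (p ∣ v 9 ∧ p ∣ v 10 ∧ p ∣ v 11))), B n v) ∧
    (∑ v ∈ (Uset n).filter (fun v => (¬ (p ∣ v 0 ∧ p ∣ v 1 ∧ p ∣ v 2)) ∧ (¬ (p ∣ v 3 ∧ p ∣ v 4 ∧ p ∣ v 5))), B n v) = (∑ v ∈ (Uset n).filter (fun v => (¬ (p ∣ v 6 ∧ p ∣ v 7 ∧ p ∣ v 8)) ∧ (¬ (p ∣ v 9 ∧ p ∣ v 10 ∧ p ∣ v 11))), B n v) := by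
  refine ⟨?_, ?_, ?_, ?_, ?_⟩
  · refine sum_perm fbc _ _ fbc_inv ?_ ?_ ?_
    · intro v hv
      simp only [Finset.mem_filter, fbc_0, fbc_1, fbc_2, fbc_3, fbc_4, fbc_5, fbc_6, fbc_7, fbc_8, fbc_9, fbc_10, fbc_11] at hv ⊢
      exact ⟨fbc_memU hv.1, by tauto⟩
    · intro v hv
      simp only [Finset.mem_filter, fbc_0, fbc_1, fbc_2, fbc_3, fbc_4, fbc_5, fbc_6, fbc_7, fbc_8, fbc_9, fbc_10, fbc_11] at hv ⊢
      exact ⟨fbc_memU hv.1, by tauto⟩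
    · intro v hv
      exact fbc_B (Finset.mem_filter.mp hv).1
  · refine sum_perm fbd _ _ fbd_inv ?_ ?_ ?_
    · intro v hv
      simp only [Finset.mem_filter, fbd_0, fbd_1, fbd_2, fbd_3, fbd_4, fbd_5, fbd_6, fbd_7, fbd_8, fbd_9, fbd_10, fbd_11] at hv ⊢
      exact ⟨fbd_memU hv.1, by tauto⟩
    · intro v hv
      simp only [Finset.mem_filter, fbd_0, fbd_1, fbd_2, fbd_3, fbd_4, fbd_5, fbd_6, fbd_7, fbd_8, fbd_9, fbd_10, fbd_11] at hv ⊢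
      exact ⟨fbd_memU hv.1, by tauto⟩
    · intro v hv
      exact fbd_B (Finset.mem_filter.mp hv).1
  · refine sum_perm fac _ _ fac_inv ?_ ?_ ?_
    · intro v hv
      simp only [Finset.mem_filter, fac_0, fac_1, fac_2, fac_3, fac_4, fac_5, fac_6, fac_7, fac_8, fac_9, fac_10, fac_11] at hv ⊢
      exact ⟨fac_memU hv.1, by tauto⟩
    · intro v hv
      simp only [Finset.mem_filter, fac_0, fac_1, fac_2, fac_3, fac_4, fac_5, fac_6, fac_7, fac_8, fac_9, fac_10, fac_11] at hv ⊢
      exact ⟨fac_memU hv.1, by tauto⟩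
    · intro v hv
      exact fac_B (Finset.mem_filter.mp hv).1
  · refine sum_perm fad _ _ fad_inv ?_ ?_ ?_
    · intro v hv
      simp only [Finset.mem_filter, fad_0, fad_1, fad_2, fad_3, fad_4, fad_5, fad_6, fad_7, fad_8, fad_9, fad_10, fad_11] at hv ⊢
      exact ⟨fad_memU hv.1, by tauto⟩
    · intro v hv
      simp only [Finset.mem_filter, fad_0, fad_1, fad_2, fad_3, fad_4, fad_5, fad_6, fad_7, fad_8, fad_9, fad_10, fad_11] at hv ⊢
      exact ⟨fad_memU hv.1, by tauto⟩
    · intro v hv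
      exact fad_B (Finset.mem_filter.mp hv).1
  · refine sum_perm fcd _ _ fcd_inv ?_ ?_ ?_
    · intro v hv
      simp only [Finset.mem_filter, fcd_0, fcd_1, fcd_2, fcd_3, fcd_4, fcd_5, fcd_6, fcd_7, fcd_8, fcd_9, fcd_10, fcd_11] at hv ⊢
      exact ⟨fcd_memU hv.1, by tauto⟩
    · intro v hv
      simp only [Finset.mem_filter, fcd_0, fcd_1, fcd_2, fcd_3, fcd_4, fcd_5, fcd_6, fcd_7, fcd_8, fcd_9, fcd_10, fcd_11] at hv ⊢
      exact ⟨fcd_memU hv.1, by tauto⟩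
    · intro v hv
      exact fcd_B (Finset.mem_filter.mp hv).1

/-- The six sums of `B` over the sets `U_{xy}(m·p^r)` for distinct `x, y ∈ {a,b,c,d}`
are all equal. -/
theorem six_sums_equal (p m r : ℕ) (hp : p.Prime) (hm : 1 ≤ m) (hr : 1 ≤ r) :
    let n := m * p ^ r
    let NA := fun v : Fin 12 → ℕ => ¬ (p ∣ v 0 ∧ p ∣ v 1 ∧ p ∣ v 2)
    let NB := fun v : Fin 12 → ℕ => ¬ (p ∣ v 3 ∧ p ∣ v 4 ∧ p ∣ v 5)
    let NC := fun v : Fin 12 → ℕ => ¬ (p ∣ v 6 ∧ p ∣ v 7 ∧ p ∣ v 8)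
    let ND := fun v : Fin 12 → ℕ => ¬ (p ∣ v 9 ∧ p ∣ v 10 ∧ p ∣ v 11)
    let Sab := ∑ v ∈ (Uset n).filter (fun v => NA v ∧ NB v), B n v
    let Sac := ∑ v ∈ (Uset n).filter (fun v => NA v ∧ NC v), B n v
    let Sad := ∑ v ∈ (Uset n).filter (fun v => NA v ∧ ND v), B n v
    let Sbc := ∑ v ∈ (Uset n).filter (fun v => NB v ∧ NC v), B n v
    let Sbd := ∑ v ∈ (Uset n).filter (fun v => NB v ∧ ND v), B n v
    let Scd := ∑ v ∈ (Uset n).filter (fun v => NC v ∧ ND v), B n v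
    Sab = Sac ∧ Sab = Sad ∧ Sab = Sbc ∧ Sab = Sbd ∧ Sab = Scd := by
  exact six p (m * p ^ r)
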